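/- arXiv:2212.12576 — 3 statements merged into one kernel-verified Lean document; each statement's English description precedes it below -/
import Mathlib

section
/- Let 𝔽 be a field, A₁,…,Aₙ nonempty finite subsets of 𝔽, and B = ∏ᵢ Aᵢ. Suppose P ∈ 𝔽[x₁,…,xₙ] is a polynomial of total degree d that does not vanish on all of B. Then the number of points of B at which P is nonzero is at least min ∏ᵢ qᵢ, where the minimum is over all integers qᵢ with 1 ≤ qᵢ ≤ |Aᵢ| and ∑ᵢ qᵢ ≥ ∑ᵢ |Aᵢ| - d. -/
open Polynomial MvPolynomial in
lemma af_totalDegree_sub {F : Type*} [Field F] {n : ℕ} (x y : MvPolynomial (Fin n) F) :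
    (x - y).totalDegree ≤ max x.totalDegree y.totalDegree := by
  rw [sub_eq_add_neg]
  refine (MvPolynomial.totalDegree_add _ _).trans ?_
  have : (-y).totalDegree = y.totalDegree := by
    simp [MvPolynomial.totalDegree, MvPolynomial.support_neg]
  rw [this]

open Polynomial MvPolynomial in
lemma af_reduce {F : Type*} [Field F] {n : ℕ} (A0 : Finset F) (ha : A0.Nonempty)
    (d : ℕ) (p : Polynomial (MvPolynomial (Fin n) F))
    (hp : ∀ j, (p.coeff j).totalDegree + j ≤ d ∨ p.coeff j = 0) :
    ∃ r : Polynomial (MvPolynomial (Fin n) F),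
      r.natDegree < A0.card ∧
      (∀ j, (r.coeff j).totalDegree + j ≤ d ∨ r.coeff j = 0) ∧
      ∀ (b : Fin n → F) (c : F), c ∈ A0 →
        (r.map (MvPolynomial.eval b)).eval c = (p.map (MvPolynomial.eval b)).eval c := by
  have hcard : 0 < A0.card := Finset.card_pos.2 ha
  suffices h : ∀ (k : ℕ) (p : Polynomial (MvPolynomial (Fin n) F)), p.natDegree ≤ k →
      (∀ j, (p.coeff j).totalDegree + j ≤ d ∨ p.coeff j = 0) →
      ∃ r : Polynomial (MvPolynomial (Fin n) F),
      r.natDegree < A0.card ∧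
      (∀ j, (r.coeff j).totalDegree + j ≤ d ∨ r.coeff j = 0) ∧
      ∀ (b : Fin n → F) (c : F), c ∈ A0 →
        (r.map (MvPolynomial.eval b)).eval c = (p.map (MvPolynomial.eval b)).eval c by
    exact h p.natDegree p le_rfl hp
  clear hp p
  intro k
  induction k with
  | zero =>
    intro p hdeg hp
    exact ⟨p, lt_of_le_of_lt hdeg hcard, hp, fun _ _ _ => rfl⟩
  | succ k ih =>
    intro p hdeg hp
    by_cases hlt : p.natDegree < A0.card
    · exact ⟨p, hlt, hp, fun _ _ _ => rfl⟩
    set a := A0.card with hadef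
    set m := p.natDegree with hmdef
    have hm : a ≤ m := not_lt.1 hlt
    have hpne : p ≠ 0 := by
      intro h0
      rw [h0] at hmdef
      simp [hmdef] at hm
      omega
    -- the vanishing polynomial
    set g : F[X] := ∏ c ∈ A0, (Polynomial.X - Polynomial.C c) with hgdef
    have hgm : g.Monic := monic_prod_of_monic _ _ fun c _ => monic_X_sub_C c
    have hgdeg : g.natDegree = a := by
      rw [hgdef, natDegree_prod _ _ (fun c _ => X_sub_C_ne_zero c)]
      simp [hadef]
    set G : Polynomial (MvPolynomial (Fin n) F) := g.map MvPolynomial.C with hGdef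
    have hGm : G.Monic := hgm.map _
    have hGcoeff : ∀ i, G.coeff i = MvPolynomial.C (g.coeff i) := fun i => coeff_map _ i
    set u := p.coeff m with hudef
    have hune : u ≠ 0 := by
      rw [hudef, hmdef]
      exact leadingCoeff_ne_zero.mpr hpne
    have hum : u.totalDegree + m ≤ d := by
      rcases hp m with h | h
      · exact h
      · exact absurd h hune
    set term : Polynomial (MvPolynomial (Fin n) F) :=
      (Polynomial.C u * G) * Polynomial.X ^ (m - a) with htdef
    have hterm : ∀ j, term.coeff j =
        if m - a ≤ j then u * MvPolynomial.C (g.coeff (j - (m - a))) else 0 := by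
      intro j
      rw [htdef, coeff_mul_X_pow']
      split_ifs with h
      · rw [Polynomial.coeff_C_mul, hGcoeff]
      · rfl
    have hterm_m : term.coeff m = u := by
      rw [hterm]
      rw [if_pos (Nat.sub_le m a)]
      have : m - (m - a) = a := by omega
      have hg1 : g.coeff a = 1 := by rw [← hgdeg]; exact hgm.coeff_natDegree
      rw [this, hg1]
      simp
    have htermhigh : ∀ j, m < j → term.coeff j = 0 := by
      intro j hj
      rw [hterm, if_pos (by omega)]
      have : g.coeff (j - (m - a)) = 0 :=
        Polynomial.coeff_eq_zero_of_natDegree_lt (by omega)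
      rw [this]
      simp
    set p' := p - term with hp'def
    have hcoefflow : ∀ j, p'.coeff j = p.coeff j - term.coeff j := by
      intro j; rw [hp'def, Polynomial.coeff_sub]
    have hc : ∀ j, m ≤ j → p'.coeff j = 0 := by
      intro j hj
      rcases eq_or_lt_of_le hj with rfl | hj'
      · rw [hcoefflow, hterm_m, hudef, sub_self]
      · rw [hcoefflow, htermhigh j hj',
          Polynomial.coeff_eq_zero_of_natDegree_lt (by omega)]
        simp
    have hd' : p'.natDegree ≤ k := by
      have : p'.natDegree ≤ m - 1 := by
        rw [Polynomial.natDegree_le_iff_coeff_eq_zero]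
        intro j hj
        exact hc j (by omega)
      omega
    have hmd : m ≤ d := by omega
    have hp' : ∀ j, (p'.coeff j).totalDegree + j ≤ d ∨ p'.coeff j = 0 := by
      intro j
      by_cases hj : m ≤ j
      · exact Or.inr (hc j hj)
      left
      push_neg at hj
      have h1 : (p.coeff j).totalDegree + j ≤ d := by
        rcases hp j with h | h
        · exact h
        · rw [h]; simpa using hmd.trans' (by omega)
      have h2 : (term.coeff j).totalDegree + j ≤ d := by
        rw [hterm]
        split_ifs with h
        · refine le_trans (Nat.add_le_add_right ?_ j) (by omega : u.totalDegree + j ≤ d)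
          refine (MvPolynomial.totalDegree_mul _ _).trans ?_
          simp [MvPolynomial.totalDegree_C]
        · simpa using hmd.trans' (by omega)
      have := af_totalDegree_sub (p.coeff j) (term.coeff j)
      rw [← hcoefflow] at this
      omega
    obtain ⟨r, hr1, hr2, hr3⟩ := ih p' hd' hp'
    refine ⟨r, hr1, hr2, fun b c hc0 => ?_⟩
    rw [hr3 b c hc0]
    have hmapsub : Polynomial.map (MvPolynomial.eval b) p' =
        Polynomial.map (MvPolynomial.eval b) p - Polynomial.map (MvPolynomial.eval b) term := by
      rw [hp'def, Polynomial.map_sub]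
    have hgzero : Polynomial.eval c g = 0 := by
      rw [hgdef, Polynomial.eval_prod]
      exact Finset.prod_eq_zero hc0 (by simp)
    have hmapG : Polynomial.map (MvPolynomial.eval b) G = g := by
      rw [hGdef, Polynomial.map_map]
      have : (MvPolynomial.eval b).comp (MvPolynomial.C (σ := Fin n) (R := F)) =
          RingHom.id F := by
        ext x
        simp
      rw [this, Polynomial.map_id]
    have hterm0 : Polynomial.eval c (Polynomial.map (MvPolynomial.eval b) term) = 0 := by
      rw [htdef, Polynomial.map_mul, Polynomial.map_mul, hmapG, Polynomial.map_pow,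
        Polynomial.map_X, Polynomial.eval_mul, Polynomial.eval_mul, hgzero]
      ring
    rw [hmapsub, Polynomial.eval_sub, hterm0, sub_zero]

open scoped Classical

open Polynomial MvPolynomial in
lemma af_main {F : Type*} [Field F] : ∀ (n : ℕ) (A : Fin n → Finset F),
    (∀ i, (A i).Nonempty) → ∀ (P : MvPolynomial (Fin n) F),
    (∃ x : Fin n → F, (∀ i, x i ∈ A i) ∧ MvPolynomial.eval x P ≠ 0) →
    ∃ q : Fin n → ℕ, (∀ i, 1 ≤ q i ∧ q i ≤ (A i).card) ∧
      ((∑ i, ((A i).card : ℤ)) - (P.totalDegree : ℤ) ≤ ∑ i, (q i : ℤ)) ∧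
      ∏ i, q i ≤
        ((Fintype.piFinset A).filter (fun x => MvPolynomial.eval x P ≠ 0)).card := by
  intro n
  induction n with
  | zero =>
    intro A hA P hnv
    obtain ⟨x, hx, hxne⟩ := hnv
    refine ⟨fun i => i.elim0, fun i => i.elim0, by simp, ?_⟩
    simp only [Finset.univ_eq_empty, Finset.prod_empty]
    exact Nat.one_le_iff_ne_zero.mpr (Finset.card_ne_zero_of_mem
      (Finset.mem_filter.mpr ⟨Fintype.mem_piFinset.mpr hx, hxne⟩))
  | succ n ih =>
    intro A hA P hnv
    set a := (A 0).card with hadef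
    have ha0 : 0 < a := Finset.card_pos.2 (hA 0)
    set d := P.totalDegree with hddef
    set p := MvPolynomial.finSuccEquiv F n P with hpdef
    have hpcoeff : ∀ j, (p.coeff j).totalDegree + j ≤ d ∨ p.coeff j = 0 := by
      intro j
      by_cases h : p.coeff j = 0
      · exact Or.inr h
      · exact Or.inl (MvPolynomial.totalDegree_coeff_finSuccEquiv_add_le P j h)
    obtain ⟨r, hrdeg, hrcoeff, hrev⟩ := af_reduce (A 0) (hA 0) d p hpcoeff
    set A' : Fin n → Finset F := fun i => A i.succ with hA'def
    have hA' : ∀ i, (A' i).Nonempty := fun i => hA i.succ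
    have hkey : ∀ (b : Fin n → F) (c : F), c ∈ A 0 →
        MvPolynomial.eval (Fin.cons c b) P = (r.map (MvPolynomial.eval b)).eval c := by
      intro b c hc
      rw [MvPolynomial.eval_eq_eval_mv_eval', ← hpdef, ← hrev b c hc]
    set T : Finset ℕ := (Finset.range (r.natDegree + 1)).filter
      (fun j => ∃ b : Fin n → F, (∀ i, b i ∈ A' i) ∧
        MvPolynomial.eval b (r.coeff j) ≠ 0) with hTdef
    have hTne : T.Nonempty := by
      obtain ⟨x, hx, hxne⟩ := hnv
      set b := Fin.tail x with hbdef
      have hx0 : x 0 ∈ A 0 := hx 0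
      have hcons : Fin.cons (x 0) b = x := Fin.cons_self_tail x
      have hne : (r.map (MvPolynomial.eval b)).eval (x 0) ≠ 0 := by
        rw [← hkey b (x 0) hx0, hcons]; exact hxne
      have hmapne : r.map (MvPolynomial.eval b) ≠ 0 := fun h => hne (by rw [h]; simp)
      obtain ⟨j, hj⟩ : ∃ j, MvPolynomial.eval b (r.coeff j) ≠ 0 := by
        by_contra hall
        push_neg at hall
        apply hmapne
        ext j
        rw [Polynomial.coeff_map]
        simp [hall j]
      refine ⟨j, Finset.mem_filter.mpr ⟨Finset.mem_range.mpr ?_,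
        b, fun i => hx i.succ, hj⟩⟩
      have hrj : r.coeff j ≠ 0 := fun h => hj (by rw [h]; simp)
      have := Polynomial.le_natDegree_of_ne_zero hrj
      omega
    set t := T.max' hTne with htdef
    obtain ⟨htr, b0, hb0, hb0ne⟩ := Finset.mem_filter.mp (T.max'_mem hTne)
    have htr' := Finset.mem_range.mp htr
    have hrt : r.coeff t ≠ 0 := fun h => hb0ne (by rw [h]; simp)
    have htlt : t < a := by
      have := Polynomial.le_natDegree_of_ne_zero hrt
      omega
    have hhigh : ∀ j, t < j → ∀ b : Fin n → F, (∀ i, b i ∈ A' i) →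
        MvPolynomial.eval b (r.coeff j) = 0 := by
      intro j hj b hb
      by_contra hne
      have hrj : r.coeff j ≠ 0 := fun h => hne (by rw [h]; simp)
      have hjT : j ∈ T := Finset.mem_filter.mpr
        ⟨Finset.mem_range.mpr (by have := Polynomial.le_natDegree_of_ne_zero hrj; omega),
          b, hb, hne⟩
      exact absurd (T.le_max' j hjT) (by omega)
    obtain ⟨q', hq'1, hq'2, hq'3⟩ := ih A' hA' (r.coeff t) ⟨b0, hb0, hb0ne⟩
    have hrtd : (r.coeff t).totalDegree + t ≤ d := by
      rcases hrcoeff t with h | h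
      · exact h
      · exact absurd h hrt
    refine ⟨Fin.cons (a - t) q', ?_, ?_, ?_⟩
    · intro i
      refine Fin.cases ?_ ?_ i
      · simp only [Fin.cons_zero]
        omega
      · intro i
        simpa [Fin.cons_succ, hA'def] using hq'1 i
    · rw [Fin.sum_univ_succ, Fin.sum_univ_succ]
      simp only [Fin.cons_zero, Fin.cons_succ]
      simp only [hA'def] at hq'2
      have h1 : ((a - t : ℕ) : ℤ) = (a : ℤ) - t := by
        rw [Nat.cast_sub htlt.le]
      have h2 : ((r.coeff t).totalDegree : ℤ) + (t : ℤ) ≤ (d : ℤ) := by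
        exact_mod_cast hrtd
      rw [h1]
      have h3 : ((r.coeff t).totalDegree : ℤ) ≤ (d : ℤ) - t := by linarith
      linarith [hq'2]
    · set good := (Fintype.piFinset A').filter
        (fun b => MvPolynomial.eval b (r.coeff t) ≠ 0) with hgooddef
      have hcount : ∀ b ∈ good, a - t ≤
          ((A 0).filter (fun c => MvPolynomial.eval (Fin.cons c b) P ≠ 0)).card := by
        intro b hb
        obtain ⟨hbg, hbne⟩ := Finset.mem_filter.mp hb
        have hbgrid : ∀ i, b i ∈ A' i := Fintype.mem_piFinset.mp hbg
        set u := r.map (MvPolynomial.eval b) with hu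
        have hund : u.natDegree ≤ t := by
          rw [Polynomial.natDegree_le_iff_coeff_eq_zero]
          intro j hj
          rw [hu, Polynomial.coeff_map]
          exact hhigh j hj b hbgrid
        have hune : u ≠ 0 := by
          intro h
          apply hbne
          have h2 := congrArg (fun q => Polynomial.coeff q t) h
          simpa [hu, Polynomial.coeff_map] using h2
        have hzero : ((A 0).filter (fun c => u.eval c = 0)).card ≤ t := by
          refine le_trans ?_ (le_trans (Multiset.toFinset_card_le u.roots)
            (le_trans (Polynomial.card_roots' u) hund))
          apply Finset.card_le_card
          intro c hc
          obtain ⟨hcA, hcz⟩ := Finset.mem_filter.mp hc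
          rw [Multiset.mem_toFinset, Polynomial.mem_roots hune]
          exact hcz
        have hsplit := Finset.card_filter_add_card_filter_not
          (s := A 0) (p := fun c => u.eval c = 0)
        have hEq : (A 0).filter (fun c => MvPolynomial.eval (Fin.cons c b) P ≠ 0) =
            (A 0).filter (fun c => ¬ u.eval c = 0) := by
          apply Finset.filter_congr
          intro c hc
          rw [hkey b c hc, hu]
        rw [hEq]
        omega
      haveI : DecidableEq (Fin (n+1) → F) := Classical.decEq _
      set big := good.biUnion (fun b =>
        ((A 0).filter (fun c => MvPolynomial.eval (Fin.cons c b) P ≠ 0)).image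
          (fun c => (Fin.cons c b : Fin (n+1) → F))) with hbigdef
      have hsub : big ⊆ (Fintype.piFinset A).filter
          (fun x => MvPolynomial.eval x P ≠ 0) := by
        intro x hx
        obtain ⟨b, hbg, hx2⟩ := Finset.mem_biUnion.mp hx
        obtain ⟨c, hcf, rfl⟩ := Finset.mem_image.mp hx2
        obtain ⟨hcA, hcne⟩ := Finset.mem_filter.mp hcf
        obtain ⟨hbg', _⟩ := Finset.mem_filter.mp hbg
        have hbgrid := Fintype.mem_piFinset.mp hbg'
        refine Finset.mem_filter.mpr ⟨Fintype.mem_piFinset.mpr ?_, hcne⟩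
        intro i
        refine Fin.cases ?_ ?_ i
        · simpa using hcA
        · intro i
          simpa [hA'def] using hbgrid i
      have hbigcard : big.card = ∑ b ∈ good,
          (((A 0).filter (fun c => MvPolynomial.eval (Fin.cons c b) P ≠ 0)).image
            (fun c => (Fin.cons c b : Fin (n+1) → F))).card := by
        apply Finset.card_biUnion
        intro b hb b' hb' hne
        simp only [Function.onFun]
        rw [Finset.disjoint_left]
        intro x hx1 hx2
        obtain ⟨c, _, rfl⟩ := Finset.mem_image.mp hx1
        obtain ⟨c', _, heq⟩ := Finset.mem_image.mp hx2
        apply hne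
        have := congrArg Fin.tail heq
        simpa [Fin.tail_cons] using this.symm
      have himg : ∀ b : Fin n → F,
          (((A 0).filter (fun c => MvPolynomial.eval (Fin.cons c b) P ≠ 0)).image
            (fun c => (Fin.cons c b : Fin (n+1) → F))).card =
          ((A 0).filter (fun c => MvPolynomial.eval (Fin.cons c b) P ≠ 0)).card := by
        intro b
        apply Finset.card_image_of_injective
        intro c c' h
        have := congrArg (fun y => y 0) h
        simpa using this
      calc ∏ i, Fin.cons (a - t) q' i
          = (a - t) * ∏ i, q' i := by
            rw [Fin.prod_univ_succ]
            simp [Fin.cons_succ]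
        _ ≤ (a - t) * good.card := Nat.mul_le_mul_left _ hq'3
        _ = ∑ _b ∈ good, (a - t) := by rw [Finset.sum_const, smul_eq_mul, Nat.mul_comm]
        _ ≤ ∑ b ∈ good, ((A 0).filter
              (fun c => MvPolynomial.eval (Fin.cons c b) P ≠ 0)).card :=
            Finset.sum_le_sum hcount
        _ = big.card := by
            rw [hbigcard]
            exact Finset.sum_congr rfl fun b _ => (himg b).symm
        _ ≤ _ := Finset.card_le_card hsub

theorem stmt_3 {F : Type*} [Field F] {n : ℕ} (A : Fin n → Finset F)
    (hA : ∀ i, (A i).Nonempty) (P : MvPolynomial (Fin n) F) (d : ℕ)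
    (hd : P.totalDegree = d)
    (hnv : ∃ x : Fin n → F, (∀ i, x i ∈ A i) ∧ MvPolynomial.eval x P ≠ 0) :
    sInf {m : ℕ | ∃ q : Fin n → ℕ,
        (∀ i, 1 ≤ q i ∧ q i ≤ (A i).card) ∧
        ((∑ i, ((A i).card : ℤ)) - d ≤ ∑ i, (q i : ℤ)) ∧
        m = ∏ i, q i} ≤
      ({x : Fin n → F | (∀ i, x i ∈ A i) ∧ MvPolynomial.eval x P ≠ 0}).ncard := by
  obtain ⟨q, hq1, hq2, hq3⟩ := af_main n A hA P hnv
  have hset : {x : Fin n → F | (∀ i, x i ∈ A i) ∧ MvPolynomial.eval x P ≠ 0} =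
      ↑((Fintype.piFinset A).filter (fun x => MvPolynomial.eval x P ≠ 0)) := by
    ext x
    simp [Fintype.mem_piFinset]
  rw [hset, Set.ncard_coe_finset]
  refine le_trans (Nat.sInf_le ⟨q, hq1, by rw [← hd]; exact hq2, rfl⟩) hq3
end

section
/- Let f ∈ 𝔽₃[x₁,…,xₙ] be a product of l linear polynomials, each of the form xᵢ ± xⱼ - a for some i < j and a ∈ 𝔽₃. If f does not vanish on all of 𝔽₃ⁿ and 2n ≥ l, then the number of points of 𝔽₃ⁿ at which f is nonzero is at least 3^(n - l/2). -/
open MvPolynomial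

def rho : ℕ → ℕ
  | 0 => 0
  | k + 1 => k % 2 + 1

lemma rho_le_two (k : ℕ) : rho k ≤ 2 := by cases k <;> simp [rho] <;> omega

lemma rho_le (k : ℕ) : rho k ≤ k := by cases k <;> simp [rho] <;> omega

lemma pow_rho (a : ZMod 3) : ∀ k, a ^ rho k = a ^ k
  | 0 => rfl
  | 1 => rfl
  | 2 => rfl
  | (k+3) => by
      have h1 : rho (k+3) = rho (k+1) := by show (k+2) % 2 + 1 = k % 2 + 1; omega
      have h3 : a ^ 3 = a := by revert a; decide
      have h2 : a ^ (k+3) = a ^ (k+1) := by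
        calc a ^ (k+3) = a ^ k * a ^ 3 := by ring
        _ = a ^ k * a := by rw [h3]
        _ = a ^ (k+1) := by ring
      rw [h1, pow_rho a (k+1), h2]

lemma rho_zero : rho 0 = 0 := rfl

noncomputable def red {n : ℕ} (f : MvPolynomial (Fin n) (ZMod 3)) : MvPolynomial (Fin n) (ZMod 3) :=
  ∑ m ∈ f.support, monomial (Finsupp.mapRange rho rho_zero m) (coeff m f)

lemma eval_red {n : ℕ} (f : MvPolynomial (Fin n) (ZMod 3)) (x : Fin n → ZMod 3) :
    eval x (red f) = eval x f := by
  conv_rhs => rw [← support_sum_monomial_coeff f]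
  rw [red, map_sum, map_sum]
  refine Finset.sum_congr rfl fun m _ => ?_
  rw [eval_monomial, eval_monomial]
  congr 1
  rw [Finsupp.prod_mapRange_index (by simp)]
  exact Finsupp.prod_congr fun i _ => pow_rho (x i) (m i)

lemma degreeOf_red_le {n : ℕ} (f : MvPolynomial (Fin n) (ZMod 3)) (v : Fin n) :
    degreeOf v (red f) ≤ 2 := by
  rw [degreeOf_le_iff]
  intro m hm
  have h := support_sum hm
  simp only [Finset.mem_biUnion] at h
  obtain ⟨m0, _, hm0⟩ := h
  have := support_monomial_subset hm0
  simp only [Finset.mem_singleton] at this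
  subst this
  simpa using rho_le_two (m0 v)

lemma totalDegree_red_le {n : ℕ} (f : MvPolynomial (Fin n) (ZMod 3)) :
    totalDegree (red f) ≤ totalDegree f := by
  refine (totalDegree_finset_sum _ _).trans ?_
  rw [Finset.sup_le_iff]
  intro m hm
  refine (totalDegree_monomial_le _ _).trans ?_
  rw [Finsupp.sum_mapRange_index (by simp)]
  calc (m.sum fun _ e => rho e) ≤ m.sum fun _ e => e :=
        Finset.sum_le_sum fun i _ => rho_le _
    _ ≤ f.totalDegree := le_totalDegree hm

lemma thmA (n : ℕ) : ∀ f : MvPolynomial (Fin n) (ZMod 3), f ≠ 0 →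
    (∀ v, f.degreeOf v ≤ 2) →
    3 ^ (2 * n) ≤ (Finset.univ.filter fun x : Fin n → ZMod 3 => eval x f ≠ 0).card ^ 2
      * 3 ^ f.totalDegree := by
  induction n with
  | zero =>
    intro f hf0 _
    obtain ⟨c, rfl⟩ := C_surjective (Fin 0) f
    have hc : c ≠ 0 := fun h => hf0 (by rw [h, map_zero])
    simp [hc, Finset.filter_true_of_mem, totalDegree_C]
  | succ n ih =>
    intro f hf0 hdeg
    have hF : finSuccEquiv (ZMod 3) n f ≠ 0 := fun h => hf0 (by
      have := congrArg (finSuccEquiv (ZMod 3) n).symm h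
      simpa using this)
    set F := finSuccEquiv (ZMod 3) n f with hFdef
    set t := F.natDegree with htdef
    have hg : F.coeff t ≠ 0 := by
      rw [htdef, Polynomial.coeff_natDegree]
      exact Polynomial.leadingCoeff_ne_zero.mpr hF
    have ht2 : t ≤ 2 := by
      rw [htdef, hFdef, natDegree_finSuccEquiv]; exact hdeg 0
    have hgdeg : ∀ v, (F.coeff t).degreeOf v ≤ 2 := fun v =>
      (degreeOf_coeff_finSuccEquiv f v t).trans (hdeg v.succ)
    have hgtot : (F.coeff t).totalDegree + t ≤ f.totalDegree :=
      totalDegree_coeff_finSuccEquiv_add_le f t hg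
    have IH := ih (F.coeff t) hg hgdeg
    set Ng := (Finset.univ.filter fun x : Fin n → ZMod 3 => eval x (F.coeff t) ≠ 0).card with hNgdef
    set N := (Finset.univ.filter fun x : Fin (n+1) → ZMod 3 => eval x f ≠ 0).card with hNdef
    have hsum : N = ∑ x' : Fin n → ZMod 3,
        (Finset.univ.filter fun y : ZMod 3 => eval (Fin.cons y x') f ≠ 0).card := by
      calc N = ∑ x : Fin (n+1) → ZMod 3, (if eval x f ≠ 0 then 1 else 0) :=
            Finset.card_filter _ _
        _ = ∑ p : ZMod 3 × (Fin n → ZMod 3), (if eval (Fin.cons p.1 p.2) f ≠ 0 then 1 else 0) :=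
            Fintype.sum_equiv (Fin.consEquiv (fun _ => ZMod 3)).symm _ _ (fun x => by
              show (if eval x f ≠ 0 then 1 else 0)
                = if eval (Fin.cons (x 0) (Fin.tail x)) f ≠ 0 then 1 else 0
              rw [Fin.cons_self_tail])
        _ = ∑ y : ZMod 3, ∑ x' : Fin n → ZMod 3, (if eval (Fin.cons y x') f ≠ 0 then 1 else 0) :=
            by rw [Fintype.sum_prod_type]
        _ = ∑ x' : Fin n → ZMod 3, ∑ y : ZMod 3, (if eval (Fin.cons y x') f ≠ 0 then 1 else 0) :=
            Finset.sum_comm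
        _ = _ := by simp [Finset.card_filter]
    have hcard : ∀ x' : Fin n → ZMod 3, eval x' (F.coeff t) ≠ 0 →
        3 - t ≤ (Finset.univ.filter fun y : ZMod 3 => eval (Fin.cons y x') f ≠ 0).card := by
      intro x' hx'
      set p := Polynomial.map (eval x') F with hpdef
      have hpc : p.coeff t ≠ 0 := by rw [hpdef, Polynomial.coeff_map]; exact hx'
      have hp0 : p ≠ 0 := fun h => hpc (by rw [h, Polynomial.coeff_zero])
      have hpd : p.natDegree ≤ t := Polynomial.natDegree_map_le
      have heval : ∀ y, eval (Fin.cons y x') f = p.eval y := fun y =>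
        eval_eq_eval_mv_eval' x' y f
      have hroots : (Finset.univ.filter fun y : ZMod 3 => p.eval y = 0).card ≤ t := by
        refine le_trans (Finset.card_le_card fun y hy => ?_)
          (le_trans (Multiset.toFinset_card_le _) (le_trans (Polynomial.card_roots' p) hpd))
        simp only [Finset.mem_filter, Finset.mem_univ, true_and] at hy
        rw [Multiset.mem_toFinset, Polynomial.mem_roots hp0]
        exact hy
      have h3 : (Finset.univ.filter fun y : ZMod 3 => p.eval y = 0).card
          + (Finset.univ.filter fun y : ZMod 3 => ¬ (p.eval y = 0)).card = 3 := by
        rw [Finset.card_filter_add_card_filter_not, Finset.card_univ]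
        rfl
      have heq : (Finset.univ.filter fun y : ZMod 3 => eval (Fin.cons y x') f ≠ 0).card
          = (Finset.univ.filter fun y : ZMod 3 => ¬ (p.eval y = 0)).card := by
        congr 1
        apply Finset.filter_congr
        intro y _
        simp [heval y]
      omega
    have key : (3 - t) * Ng ≤ N := by
      calc (3 - t) * Ng
          = ∑ _x' ∈ Finset.univ.filter (fun x' : Fin n → ZMod 3 => eval x' (F.coeff t) ≠ 0),
              (3 - t) := by rw [Finset.sum_const, smul_eq_mul, mul_comm]
        _ ≤ ∑ x' ∈ Finset.univ.filter (fun x' : Fin n → ZMod 3 => eval x' (F.coeff t) ≠ 0),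
              (Finset.univ.filter fun y : ZMod 3 => eval (Fin.cons y x') f ≠ 0).card :=
            Finset.sum_le_sum fun x' hx' => hcard x' (by
              simpa using (Finset.mem_filter.mp hx').2)
        _ ≤ ∑ x' : Fin n → ZMod 3,
              (Finset.univ.filter fun y : ZMod 3 => eval (Fin.cons y x') f ≠ 0).card :=
            Finset.sum_le_sum_of_subset (Finset.filter_subset _ _)
        _ = N := hsum.symm
    have h9 : 9 ≤ (3 - t) ^ 2 * 3 ^ t := by interval_cases t <;> norm_num
    calc 3 ^ (2 * (n + 1)) = 9 * 3 ^ (2 * n) := by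
          rw [show 2 * (n + 1) = 2 * n + 2 by ring, pow_add]; ring
      _ ≤ ((3 - t) ^ 2 * 3 ^ t) * (Ng ^ 2 * 3 ^ (F.coeff t).totalDegree) :=
          Nat.mul_le_mul h9 IH
      _ = ((3 - t) * Ng) ^ 2 * 3 ^ ((F.coeff t).totalDegree + t) := by
          rw [mul_pow, pow_add]; ring
      _ ≤ N ^ 2 * 3 ^ ((F.coeff t).totalDegree + t) :=
          Nat.mul_le_mul_right _ (Nat.pow_le_pow_left key 2)
      _ ≤ N ^ 2 * 3 ^ f.totalDegree :=
          Nat.mul_le_mul_left _ (Nat.pow_le_pow_right (by norm_num) hgtot)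

theorem stmt_4 {n l : ℕ} (i j : Fin l → Fin n) (hij : ∀ e, i e < j e)
    (ε : Fin l → ZMod 3) (hε : ∀ e, ε e = 1 ∨ ε e = -1) (a : Fin l → ZMod 3)
    (f : MvPolynomial (Fin n) (ZMod 3))
    (hf : f = ∏ e : Fin l,
      (MvPolynomial.X (i e) + MvPolynomial.C (ε e) * MvPolynomial.X (j e)
        - MvPolynomial.C (a e)))
    (hnv : ∃ x : Fin n → ZMod 3, MvPolynomial.eval x f ≠ 0)
    (hnl : 2 * n ≥ l) :
    (3 : ℝ) ^ ((n : ℝ) - (l : ℝ) / 2) ≤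
      ({x : Fin n → ZMod 3 | MvPolynomial.eval x f ≠ 0}).ncard := by
  classical
  -- total degree of f is at most l
  have hdegf : f.totalDegree ≤ l := by
    rw [hf]
    refine (totalDegree_finset_prod _ _).trans ?_
    have h1 : ∀ e : Fin l,
        (X (i e) + C (ε e) * X (j e) - C (a e) : MvPolynomial (Fin n) (ZMod 3)).totalDegree ≤ 1 := by
      intro e
      refine (totalDegree_sub _ _).trans ?_
      have h2 : (X (i e) + C (ε e) * X (j e) : MvPolynomial (Fin n) (ZMod 3)).totalDegree ≤ 1 := by
        refine (totalDegree_add _ _).trans ?_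
        have h3 : (C (ε e) * X (j e) : MvPolynomial (Fin n) (ZMod 3)).totalDegree ≤ 1 := by
          refine (totalDegree_mul _ _).trans ?_
          simp [totalDegree_C, totalDegree_X]
        simp only [totalDegree_X, max_le_iff]
        exact ⟨le_refl 1, h3⟩
      simpa [totalDegree_C] using h2
    calc ∑ e : Fin l, (X (i e) + C (ε e) * X (j e) - C (a e) :
            MvPolynomial (Fin n) (ZMod 3)).totalDegree
        ≤ ∑ _e : Fin l, 1 := Finset.sum_le_sum fun e _ => h1 e
      _ = l := by simp
  obtain ⟨x0, hx0⟩ := hnv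
  have hFne : red f ≠ 0 := fun h => hx0 (by rw [← eval_red f x0, h, map_zero])
  have hA := thmA n (red f) hFne (degreeOf_red_le f)
  have hdl : (red f).totalDegree ≤ l := (totalDegree_red_le f).trans hdegf
  set N := (Finset.univ.filter fun x : Fin n → ZMod 3 => eval x f ≠ 0).card with hNdef
  have hNset : ({x : Fin n → ZMod 3 | eval x f ≠ 0}).ncard = N := by
    rw [hNdef, ← Set.ncard_coe_finset]
    congr 1
    ext x
    simp
  have hNred : (Finset.univ.filter fun x : Fin n → ZMod 3 => eval x (red f) ≠ 0).card = N := by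
    rw [hNdef]
    congr 1
    apply Finset.filter_congr
    intro x _
    rw [eval_red]
  rw [hNred] at hA
  rw [hNset]
  have hN0 : (0:ℝ) ≤ (N:ℝ) := Nat.cast_nonneg N
  have hcast : ((3:ℝ) ^ (2*n) : ℝ) ≤ (N:ℝ) ^ 2 * 3 ^ (red f).totalDegree := by
    exact_mod_cast hA
  have h3l : ((3:ℝ) ^ (red f).totalDegree : ℝ) ≤ 3 ^ l :=
    pow_le_pow_right₀ (by norm_num) hdl
  have hle : (3:ℝ) ^ (2*n) ≤ (N:ℝ) ^ 2 * 3 ^ l := by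
    calc (3:ℝ) ^ (2*n) ≤ (N:ℝ) ^ 2 * 3 ^ (red f).totalDegree := hcast
      _ ≤ (N:ℝ) ^ 2 * 3 ^ l := by
          apply mul_le_mul_of_nonneg_left h3l (by positivity)
  have h2 : ((3:ℝ) ^ ((n:ℝ) - (l:ℝ)/2)) ^ 2 ≤ (N:ℝ) ^ 2 := by
    rw [← Real.rpow_natCast ((3:ℝ) ^ ((n:ℝ) - (l:ℝ)/2)) 2,
      ← Real.rpow_mul (by norm_num : (0:ℝ) ≤ 3)]
    rw [show ((n:ℝ) - (l:ℝ)/2) * ((2:ℕ):ℝ) = ((2*n:ℕ):ℝ) - ((l:ℕ):ℝ) by push_cast; ring]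
    rw [Real.rpow_sub (by norm_num : (0:ℝ) < 3), Real.rpow_natCast, Real.rpow_natCast]
    rw [div_le_iff₀ (by positivity)]
    exact hle
  exact le_of_pow_le_pow_left₀ two_ne_zero hN0 h2
end

section
/- For each k ≥ 1, the graph H_k obtained from K₁ ∨ P_{2k+2} by adding a new vertex z adjacent to both endpoints of the path is uniquely 3-colorable: there is exactly one partition of its vertex set into 3 independent sets. -/
/-- The graph `H_k` on vertex set `Fin (2k+2) ⊕ Bool`: the path `0 - 1 - ⋯ - (2k+1)`
on the `inl` vertices, the join vertex `w = inr false` adjacent to every path vertex,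
and the vertex `z = inr true` adjacent to the two endpoints of the path. -/
def Hk (k : ℕ) : SimpleGraph (Fin (2 * k + 2) ⊕ Bool) :=
  SimpleGraph.fromRel fun u v =>
    match u, v with
    | .inl i, .inl j => (i : ℕ) + 1 = (j : ℕ)
    | .inl i, .inr b => if b then ((i : ℕ) = 0 ∨ (i : ℕ) = 2 * k + 1) else True
    | .inr _, .inl _ => False
    | .inr _, .inr _ => False

/-- `P` is a partition of the vertex set of `G` into `k` independent sets. -/
def IsIndepPartition {V : Type*} (G : SimpleGraph V) (k : ℕ) (P : Set (Set V)) : Prop :=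
  (∀ s ∈ P, s.Nonempty) ∧
  (∀ s ∈ P, ∀ v ∈ s, ∀ w ∈ s, ¬ G.Adj v w) ∧
  ⋃₀ P = Set.univ ∧
  P.Pairwise Disjoint ∧
  P.ncard = k

lemma hk_ll (k : ℕ) (i j : Fin (2*k+2)) :
    (Hk k).Adj (.inl i) (.inl j) ↔ ((i:ℕ)+1 = j ∨ (j:ℕ)+1 = i) := by
  simp only [Hk, SimpleGraph.fromRel_adj]
  constructor
  · rintro ⟨-, h⟩; exact h
  · intro h
    refine ⟨?_, h⟩
    intro heq
    injection heq with heq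
    rw [heq] at h
    omega

lemma hk_lw (k : ℕ) (i : Fin (2*k+2)) : (Hk k).Adj (.inl i) (.inr false) := by
  simp only [Hk, SimpleGraph.fromRel_adj]
  exact ⟨by simp, Or.inl (by simp)⟩

lemma hk_lz (k : ℕ) (i : Fin (2*k+2)) :
    (Hk k).Adj (.inl i) (.inr true) ↔ ((i:ℕ) = 0 ∨ (i:ℕ) = 2*k+1) := by
  simp only [Hk, SimpleGraph.fromRel_adj]
  constructor
  · rintro ⟨-, h | h⟩
    · simpa using h
    · simp at h
  · intro h
    exact ⟨by simp, Or.inl (by simpa using h)⟩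

lemma hk_rr (k : ℕ) (a b : Bool) : ¬ (Hk k).Adj (.inr a) (.inr b) := by
  simp [Hk, SimpleGraph.fromRel_adj]

def Ae (k : ℕ) : Set (Fin (2*k+2) ⊕ Bool) := {v | ∃ i : Fin (2*k+2), v = .inl i ∧ Even (i:ℕ)}
def Ao (k : ℕ) : Set (Fin (2*k+2) ⊕ Bool) := {v | ∃ i : Fin (2*k+2), v = .inl i ∧ Odd (i:ℕ)}
def Cw (k : ℕ) : Set (Fin (2*k+2) ⊕ Bool) := {v | ∃ b : Bool, v = .inr b}

lemma exists_part (k : ℕ) : IsIndepPartition (Hk k) 3 {Ae k, Ao k, Cw k} := by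
  have v0 : Fin (2*k+2) := ⟨0, by omega⟩
  have hAeAo : Ae k ≠ Ao k := by
    intro h
    have h0 : (Sum.inl (⟨0, by omega⟩ : Fin (2*k+2)) : Fin (2*k+2) ⊕ Bool) ∈ Ae k :=
      ⟨⟨0, by omega⟩, rfl, by simp⟩
    rw [h] at h0
    obtain ⟨i, hi, hodd⟩ := h0
    injection hi with hi
    rw [← hi] at hodd
    simp [Nat.odd_iff] at hodd
  have hAeCw : Ae k ≠ Cw k := by
    intro h
    have h0 : (Sum.inl (⟨0, by omega⟩ : Fin (2*k+2)) : Fin (2*k+2) ⊕ Bool) ∈ Ae k :=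
      ⟨⟨0, by omega⟩, rfl, by simp⟩
    rw [h] at h0
    obtain ⟨b, hb⟩ := h0
    exact absurd hb (by simp)
  have hAoCw : Ao k ≠ Cw k := by
    intro h
    have h0 : (Sum.inl (⟨1, by omega⟩ : Fin (2*k+2)) : Fin (2*k+2) ⊕ Bool) ∈ Ao k :=
      ⟨⟨1, by omega⟩, rfl, by simp⟩
    rw [h] at h0
    obtain ⟨b, hb⟩ := h0
    exact absurd hb (by simp)
  refine ⟨?_, ?_, ?_, ?_, ?_⟩
  · rintro s (rfl | rfl | rfl)
    · exact ⟨.inl ⟨0, by omega⟩, ⟨0, by omega⟩, rfl, by simp⟩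
    · exact ⟨.inl ⟨1, by omega⟩, ⟨1, by omega⟩, rfl, by simp⟩
    · exact ⟨.inr false, false, rfl⟩
  · rintro s (rfl | rfl | rfl) v ⟨i, rfl, hi⟩ w ⟨j, rfl, hj⟩
    · rw [hk_ll]
      rw [Nat.even_iff] at hi hj
      omega
    · rw [hk_ll]
      rw [Nat.odd_iff] at hi hj
      omega
    · exact hk_rr k i j
  · ext v
    simp only [Set.mem_univ, iff_true, Set.mem_sUnion]
    rcases v with i | b
    · rcases Nat.even_or_odd (i : ℕ) with h | h
      · exact ⟨Ae k, by simp, i, rfl, h⟩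
      · exact ⟨Ao k, by simp [Ao], i, rfl, h⟩
    · exact ⟨Cw k, by simp [Cw], b, rfl⟩
  · rintro s (rfl | rfl | rfl) t (rfl | rfl | rfl) hne <;>
      first
        | exact absurd rfl hne
        | (rw [Set.disjoint_left]
           rintro v ⟨i, rfl, hi⟩ ⟨j, hj, hj2⟩ <;>
             first
               | (injection hj with hj; rw [← hj] at hj2; rw [Nat.even_iff] at *; rw [Nat.odd_iff] at *; omega)
               | exact absurd hj (by simp))
  · exact Set.ncard_eq_three.mpr ⟨_, _, _, hAeAo, hAeCw, hAoCw, rfl⟩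
lemma unique_part (k : ℕ) (Q : Set (Set (Fin (2*k+2) ⊕ Bool)))
    (hQP : IsIndepPartition (Hk k) 3 Q) : Q = {Ae k, Ao k, Cw k} := by
  obtain ⟨hne, hind, hcov, hdisj, hcard⟩ := hQP
  have huniq : ∀ s ∈ Q, ∀ t ∈ Q, ∀ v, v ∈ s → v ∈ t → s = t := by
    intro s hs t ht v hvs hvt
    by_contra h
    exact (Set.disjoint_left.mp (hdisj hs ht h)) hvs hvt
  have hmem : ∀ v : Fin (2*k+2) ⊕ Bool, ∃ s ∈ Q, v ∈ s := by
    intro v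
    have : v ∈ ⋃₀ Q := hcov ▸ Set.mem_univ v
    exact this
  obtain ⟨S0, hS0Q, hS0⟩ := hmem (.inl ⟨0, by omega⟩)
  obtain ⟨S1, hS1Q, hS1⟩ := hmem (.inl ⟨1, by omega⟩)
  obtain ⟨Sw, hSwQ, hSw⟩ := hmem (.inr false)
  have adj01 : (Hk k).Adj (.inl ⟨0, by omega⟩) (.inl ⟨1, by omega⟩) :=
    (hk_ll k _ _).mpr (Or.inl rfl)
  have hS0S1 : S0 ≠ S1 := fun h => hind S1 hS1Q _ (h ▸ hS0) _ hS1 adj01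
  have hSwS0 : Sw ≠ S0 := fun h =>
    hind S0 hS0Q _ hS0 _ (h ▸ hSw) (hk_lw k _)
  have hSwS1 : Sw ≠ S1 := fun h =>
    hind S1 hS1Q _ hS1 _ (h ▸ hSw) (hk_lw k _)
  have hQ : Q = {S0, S1, Sw} := by
    refine (Set.eq_of_subset_of_ncard_le ?_ ?_ ?_).symm
    · rintro s (rfl | rfl | rfl) <;> assumption
    · rw [hcard]
      exact le_of_eq (Set.ncard_eq_three.mpr
        ⟨S0, S1, Sw, hS0S1, fun h => hSwS0 h.symm, fun h => hSwS1 h.symm, rfl⟩).symm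
    · exact Set.toFinite _
  have key : ∀ n : ℕ, ∀ h : n < 2*k+2,
      (Even n → Sum.inl ⟨n, h⟩ ∈ S0) ∧ (Odd n → Sum.inl ⟨n, h⟩ ∈ S1) := by
    intro n
    induction n with
    | zero =>
      intro h
      exact ⟨fun _ => hS0, fun ho => absurd ho (by simp [Nat.odd_iff])⟩
    | succ n ih =>
      intro h
      have hn : n < 2*k+2 := by omega
      obtain ⟨ihE, ihO⟩ := ih hn
      obtain ⟨T, hTQ, hT⟩ := hmem (.inl ⟨n+1, h⟩)
      have adj : (Hk k).Adj (.inl ⟨n, hn⟩) (.inl ⟨n+1, h⟩) :=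
        (hk_ll k _ _).mpr (Or.inl rfl)
      have hTw : T ≠ Sw := fun he =>
        hind Sw hSwQ _ (he ▸ hT) _ hSw (hk_lw k _)
      have hT01 : T = S0 ∨ T = S1 := by
        have hmemT : T ∈ ({S0, S1, Sw} : Set _) := hQ ▸ hTQ
        rcases hmemT with rfl | rfl | rfl
        · exact Or.inl rfl
        · exact Or.inr rfl
        · exact absurd rfl hTw
      constructor
      · intro hev
        have hno : Odd n := by
          rcases Nat.even_or_odd n with he | ho
          · exact absurd hev (by simp [Nat.even_add_one, he])
          · exact ho
        have hnS1 : Sum.inl (⟨n, hn⟩ : Fin (2*k+2)) ∈ S1 := ihO hno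
        have hTne : T ≠ S1 := fun he => hind S1 hS1Q _ hnS1 _ (he ▸ hT) adj
        rcases hT01 with rfl | rfl
        · exact hT
        · exact absurd rfl hTne
      · intro hod
        have hne' : Even n := by
          rcases Nat.even_or_odd n with he | ho
          · exact he
          · exact absurd hod (by simp [Nat.odd_add_one, Nat.not_even_iff_odd.mpr ho])
        have hnS0 : Sum.inl (⟨n, hn⟩ : Fin (2*k+2)) ∈ S0 := ihE hne'
        have hTne : T ≠ S0 := fun he => hind S0 hS0Q _ hnS0 _ (he ▸ hT) adj
        rcases hT01 with rfl | rfl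
        · exact absurd rfl hTne
        · exact hT
  have hlastmem : Sum.inl (⟨2*k+1, by omega⟩ : Fin (2*k+2)) ∈ S1 :=
    (key (2*k+1) (by omega)).2 ⟨k, by ring⟩
  -- z belongs to Sw
  obtain ⟨Tz, hTzQ, hTz⟩ := hmem (.inr true)
  have hz0 : Tz ≠ S0 := fun he =>
    hind S0 hS0Q _ hS0 _ (he ▸ hTz) ((hk_lz k _).mpr (Or.inl rfl))
  have hz1 : Tz ≠ S1 := fun he =>
    hind S1 hS1Q _ hlastmem _ (he ▸ hTz) ((hk_lz k _).mpr (Or.inr rfl))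
  have hzSw : Sum.inr true ∈ Sw := by
    have hmemT : Tz ∈ ({S0, S1, Sw} : Set _) := hQ ▸ hTzQ
    rcases hmemT with rfl | rfl | rfl
    · exact absurd rfl hz0
    · exact absurd rfl hz1
    · exact hTz
  -- identify the three parts
  have hS0A : S0 = Ae k := by
    ext v
    constructor
    · intro hv
      rcases v with i | b
      · rcases Nat.even_or_odd (i : ℕ) with he | ho
        · exact ⟨i, rfl, he⟩
        · have : Sum.inl (⟨(i:ℕ), i.isLt⟩ : Fin (2*k+2)) ∈ S1 := (key _ i.isLt).2 ho
          rw [Fin.eta] at this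
          exact absurd (huniq S0 hS0Q S1 hS1Q _ hv this) hS0S1
      · cases b
        · exact absurd (huniq Sw hSwQ S0 hS0Q _ hSw hv) hSwS0
        · exact absurd (huniq Sw hSwQ S0 hS0Q _ hzSw hv) hSwS0
    · rintro ⟨i, rfl, hi⟩
      have := (key (i:ℕ) i.isLt).1 hi
      rwa [Fin.eta] at this
  have hS1A : S1 = Ao k := by
    ext v
    constructor
    · intro hv
      rcases v with i | b
      · rcases Nat.even_or_odd (i : ℕ) with he | ho
        · have : Sum.inl (⟨(i:ℕ), i.isLt⟩ : Fin (2*k+2)) ∈ S0 := (key _ i.isLt).1 he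
          rw [Fin.eta] at this
          exact absurd (huniq S0 hS0Q S1 hS1Q _ this hv) hS0S1
        · exact ⟨i, rfl, ho⟩
      · cases b
        · exact absurd (huniq Sw hSwQ S1 hS1Q _ hSw hv) hSwS1
        · exact absurd (huniq Sw hSwQ S1 hS1Q _ hzSw hv) hSwS1
    · rintro ⟨i, rfl, hi⟩
      have := (key (i:ℕ) i.isLt).2 hi
      rwa [Fin.eta] at this
  have hSwA : Sw = Cw k := by
    ext v
    constructor
    · intro hv
      rcases v with i | b
      · rcases Nat.even_or_odd (i : ℕ) with he | ho
        · have : Sum.inl (⟨(i:ℕ), i.isLt⟩ : Fin (2*k+2)) ∈ S0 := (key _ i.isLt).1 he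
          rw [Fin.eta] at this
          exact absurd (huniq Sw hSwQ S0 hS0Q _ hv this) hSwS0
        · have : Sum.inl (⟨(i:ℕ), i.isLt⟩ : Fin (2*k+2)) ∈ S1 := (key _ i.isLt).2 ho
          rw [Fin.eta] at this
          exact absurd (huniq Sw hSwQ S1 hS1Q _ hv this) hSwS1
      · exact ⟨b, rfl⟩
    · rintro ⟨b, rfl⟩
      cases b
      · exact hSw
      · exact hzSw
  rw [hQ, hS0A, hS1A, hSwA]

theorem stmt_10 (k : ℕ) (hk : 1 ≤ k) :
    ∃! P : Set (Set (Fin (2 * k + 2) ⊕ Bool)), IsIndepPartition (Hk k) 3 P :=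
  ⟨{Ae k, Ao k, Cw k}, exists_part k, fun Q hQ => unique_part k Q hQ⟩
end
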